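/- There exists a unitary U₁₂ acting on the first two qutrits such that for each i ∈ {0,1,2}, (U₁₂⊗I)|i_L⟩ = |i⟩ ⊗ |χ⟩₂₃, where |χ⟩ = (|00⟩+|11⟩+|22⟩)/√3; i.e., the three-qutrit code can recover the logical qutrit from the first two physical qutrits. -/

import Mathlib

open Matrix Kronecker BigOperators MeasureTheory

/-- Von Neumann entropy of a matrix (via eigenvalues of a Hermitian matrix). -/
noncomputable def vNEntropy {n : Type*} [Fintype n] [DecidableEq n] (ρ : Matrix n n ℂ) : ℝ :=
  if h : ρ.IsHermitian then -∑ i, h.eigenvalues i * Real.log (h.eigenvalues i) else 0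

/-- Partial trace over the second (right) tensor factor. -/
noncomputable def ptraceR {a b : Type*} [Fintype b] (ρ : Matrix (a × b) (a × b) ℂ) :
    Matrix a a ℂ := Matrix.of fun i j => ∑ k, ρ (i, k) (j, k)

/-- Partial trace over the first (left) tensor factor. -/
noncomputable def ptraceL {a b : Type*} [Fintype a] (ρ : Matrix (a × b) (a × b) ℂ) :
    Matrix b b ℂ := Matrix.of fun i j => ∑ k, ρ (k, i) (k, j)

/-- Outer product |v⟩⟨w|. -/
def outer {n : Type*} (v w : n → ℂ) : Matrix n n ℂ := Matrix.of fun i j => v i * star (w j)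
/-- Basis vector `|abc⟩` of three qutrits. -/
noncomputable def ket3 (a b c : Fin 3) : (Fin 3 × Fin 3) × Fin 3 → ℂ :=
  fun p => if p.1.1 = a ∧ p.1.2 = b ∧ p.2 = c then 1 else 0

noncomputable def L0 : (Fin 3 × Fin 3) × Fin 3 → ℂ :=
  (Real.sqrt 3 : ℂ)⁻¹ • (ket3 0 0 0 + ket3 1 1 1 + ket3 2 2 2)

noncomputable def L1 : (Fin 3 × Fin 3) × Fin 3 → ℂ :=
  (Real.sqrt 3 : ℂ)⁻¹ • (ket3 0 1 2 + ket3 2 0 1 + ket3 1 2 0)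

noncomputable def L2 : (Fin 3 × Fin 3) × Fin 3 → ℂ :=
  (Real.sqrt 3 : ℂ)⁻¹ • (ket3 0 2 1 + ket3 1 0 2 + ket3 2 1 0)

noncomputable def codeState : Fin 3 → ((Fin 3 × Fin 3) × Fin 3 → ℂ) := ![L0, L1, L2]

/-- Inner product `⟨v, w⟩`. -/
noncomputable def ip {n : Type*} [Fintype n] (v w : n → ℂ) : ℂ := ∑ p, star (v p) * w p

/-- The maximally entangled pair `|χ⟩ = (|00⟩+|11⟩+|22⟩)/√3`. -/
noncomputable def chi : Fin 3 × Fin 3 → ℂ :=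
  fun q => (Real.sqrt 3 : ℂ)⁻¹ * (if q.1 = q.2 then 1 else 0)

/-- The relabeling permutation of the first two qutrits. -/
def recPerm : Equiv.Perm (Fin 3 × Fin 3) where
  toFun p := (p.1 + p.2, 2 * p.1 + p.2)
  invFun q := (q.2 - q.1, -(q.1 + q.2))
  left_inv := by decide
  right_inv := by decide

/-- The recovery unitary, a permutation matrix. -/
noncomputable def Urec : Matrix (Fin 3 × Fin 3) (Fin 3 × Fin 3) ℂ :=
  recPerm.toPEquiv.toMatrix

lemma star_Urec : star Urec = recPerm.symm.toPEquiv.toMatrix := by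
  ext i j
  simp only [Urec, Matrix.star_apply, PEquiv.toMatrix_toPEquiv_eq, Matrix.submatrix_apply, id_eq, Matrix.one_apply,
    Equiv.symm_apply_eq]
  split <;> split <;> simp_all [eq_comm]

lemma Urec_unitary : Urec ∈ Matrix.unitaryGroup (Fin 3 × Fin 3) ℂ := by
  rw [Matrix.mem_unitaryGroup_iff, star_Urec, Urec, ← PEquiv.toMatrix_trans,
    ← Equiv.toPEquiv_trans]
  simp

lemma Urec_mulVec (v : (Fin 3 × Fin 3) × Fin 3 → ℂ) (x y c : Fin 3) :
    ((Urec ⊗ₖ (1 : Matrix (Fin 3) (Fin 3) ℂ)).mulVec v) ((x, y), c) =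
      v (recPerm (x, y), c) := by
  have h : ∀ q, (Urec ⊗ₖ (1 : Matrix (Fin 3) (Fin 3) ℂ)) ((x, y), c) q =
      if (recPerm (x, y), c) = q then 1 else 0 := by
    rintro ⟨⟨a, b⟩, c'⟩
    simp only [Matrix.kroneckerMap_apply, Urec, PEquiv.toMatrix_apply, Equiv.toPEquiv_apply,
      Option.mem_def, Option.some.injEq, Matrix.one_apply, Prod.mk.injEq]
    split_ifs <;> simp_all [Prod.ext_iff]
  simp only [Matrix.mulVec, dotProduct, h, ite_mul, one_mul, zero_mul,
    Finset.sum_ite_eq, Finset.mem_univ, if_true]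

set_option maxHeartbeats 1000000 in
lemma Urec_recovers (i : Fin 3) :
    (Urec ⊗ₖ (1 : Matrix (Fin 3) (Fin 3) ℂ)).mulVec (codeState i) =
      fun p => (if p.1.1 = i then 1 else 0) * chi (p.1.2, p.2) := by
  funext p
  obtain ⟨⟨x, y⟩, c⟩ := p
  rw [Urec_mulVec]
  have hr : recPerm (x, y) = (x + y, 2 * x + y) := rfl
  rw [hr]
  fin_cases i <;> fin_cases x <;> fin_cases y <;> fin_cases c <;>
    simp [codeState, L0, L1, L2, ket3, chi, Matrix.vecHead, Matrix.vecTail]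

/-- There is a unitary `U₁₂` on the first two qutrits recovering the logical qutrit:
`(U₁₂ ⊗ I)|i_L⟩ = |i⟩ ⊗ |χ⟩₂₃`. -/
theorem exists_recovery_unitary :
    ∃ U : Matrix (Fin 3 × Fin 3) (Fin 3 × Fin 3) ℂ,
      U ∈ Matrix.unitaryGroup (Fin 3 × Fin 3) ℂ ∧
      ∀ i : Fin 3,
        (U ⊗ₖ (1 : Matrix (Fin 3) (Fin 3) ℂ)).mulVec (codeState i) =
          fun p => (if p.1.1 = i then 1 else 0) * chi (p.1.2, p.2) := by
  exact ⟨Urec, Urec_unitary, Urec_recovers⟩
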